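/- Let H ∈ (0, 1/2), a > 0, b ≥ 0, x₀ > 0, and let g : [0,∞) → ℝ be a continuous function with g(0) = 0 such that |g(t) − g(s)| ≤ C|t−s|^β for all s,t ∈ [0,1], for some constants C > 0 and β ∈ (0,H). Then there exists δ > 0 such that the equation x_t = x₀ + a∫₀^t s^{2H−1}/x_s ds − b∫₀^t x_s ds + g(t) has a continuous solution x : [0,δ] → [x₀/2, 2x₀] with x_0 = x₀, and this solution is unique among continuous functions on [0,δ] taking values in [x₀/2, 2x₀] with x_0 = x₀. -/

import Mathlib

open MeasureTheory Filter Set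

section Aux

/-- Clamped extension of a continuous map on `Icc 0 δ` to all of `ℝ`, taking values in
`[x₀/2, 2x₀]`. -/
private noncomputable def PicExt (x₀ : ℝ) {δ : ℝ} (hδ : (0:ℝ) ≤ δ)
    (f : C(Set.Icc (0:ℝ) δ, ℝ)) (s : ℝ) : ℝ :=
  max (x₀/2) (min (2*x₀) (Set.IccExtend hδ f s))

private lemma Ext_le_left (x₀ : ℝ) {δ : ℝ} (hδ : (0:ℝ) ≤ δ)
    (f : C(Set.Icc (0:ℝ) δ, ℝ)) (s : ℝ) : x₀/2 ≤ PicExt x₀ hδ f s :=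
  le_max_left _ _

private lemma Ext_le_right {x₀ : ℝ} (hx₀ : 0 < x₀) {δ : ℝ} (hδ : (0:ℝ) ≤ δ)
    (f : C(Set.Icc (0:ℝ) δ, ℝ)) (s : ℝ) : PicExt x₀ hδ f s ≤ 2*x₀ :=
  max_le (by linarith) (min_le_left _ _)

private lemma Ext_pos {x₀ : ℝ} (hx₀ : 0 < x₀) {δ : ℝ} (hδ : (0:ℝ) ≤ δ)
    (f : C(Set.Icc (0:ℝ) δ, ℝ)) (s : ℝ) : 0 < PicExt x₀ hδ f s :=
  lt_of_lt_of_le (by linarith) (Ext_le_left x₀ hδ f s)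

private lemma Ext_continuous (x₀ : ℝ) {δ : ℝ} (hδ : (0:ℝ) ≤ δ)
    (f : C(Set.Icc (0:ℝ) δ, ℝ)) : Continuous (PicExt x₀ hδ f) :=
  continuous_const.max (continuous_const.min f.continuous.Icc_extend')

private lemma Ext_dist (x₀ : ℝ) {δ : ℝ} (hδ : (0:ℝ) ≤ δ)
    (f g : C(Set.Icc (0:ℝ) δ, ℝ)) (s : ℝ) :
    |PicExt x₀ hδ f s - PicExt x₀ hδ g s| ≤ dist f g := by
  have h1 : |Set.IccExtend hδ f s - Set.IccExtend hδ g s| ≤ dist f g := by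
    have := ContinuousMap.dist_apply_le_dist (f := f) (g := g) (Set.projIcc 0 δ hδ s)
    simpa [Real.dist_eq, Set.IccExtend] using this
  calc |PicExt x₀ hδ f s - PicExt x₀ hδ g s|
      = |max (min (2*x₀) (Set.IccExtend hδ f s)) (x₀/2)
          - max (min (2*x₀) (Set.IccExtend hδ g s)) (x₀/2)| := by
        rw [PicExt, PicExt, max_comm (x₀/2), max_comm (x₀/2)]
    _ ≤ |min (2*x₀) (Set.IccExtend hδ f s) - min (2*x₀) (Set.IccExtend hδ g s)| :=
        abs_max_sub_max_le_abs _ _ _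
    _ ≤ max |2*x₀ - 2*x₀| |Set.IccExtend hδ f s - Set.IccExtend hδ g s| :=
        abs_min_sub_min_le_max _ _ _ _
    _ = |Set.IccExtend hδ f s - Set.IccExtend hδ g s| := by simp
    _ ≤ dist f g := h1

private lemma Ext_eq {x₀ : ℝ} {δ : ℝ} (hδ : (0:ℝ) ≤ δ)
    (f : C(Set.Icc (0:ℝ) δ, ℝ)) (hf : ∀ t, f t ∈ Set.Icc (x₀/2) (2*x₀))
    {s : ℝ} (hs : s ∈ Set.Icc (0:ℝ) δ) : PicExt x₀ hδ f s = f ⟨s, hs⟩ := by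
  rw [PicExt, Set.IccExtend_of_mem hδ f hs, min_eq_right (hf _).2, max_eq_right (hf _).1]

/-- basic integral bound used several times -/
private lemma aux_int_bound {r M t : ℝ} (hr : -1 < r) (hr0 : r + 1 ≠ 0) (ht : 0 ≤ t)
    (hM : 0 ≤ M) {φ : ℝ → ℝ}
    (hmeas : AEStronglyMeasurable φ (volume.restrict (Set.uIoc (0:ℝ) t)))
    (hb : ∀ s ∈ Set.Ioc (0:ℝ) t, |φ s| ≤ M * s ^ r) :
    IntervalIntegrable φ volume 0 t ∧
      |∫ s in (0:ℝ)..t, φ s| ≤ M * (t ^ (r+1) / (r+1)) := by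
  have hmaj : IntervalIntegrable (fun s : ℝ => M * s ^ r) volume 0 t :=
    (intervalIntegral.intervalIntegrable_rpow' hr).const_mul M
  have hIoc : Set.uIoc (0:ℝ) t = Set.Ioc 0 t := Set.uIoc_of_le ht
  have hae : ∀ᵐ s ∂(volume.restrict (Set.uIoc (0:ℝ) t)), ‖φ s‖ ≤ M * s ^ r := by
    rw [hIoc]
    refine (ae_restrict_iff' measurableSet_Ioc).2 (Filter.Eventually.of_forall ?_)
    intro s hs
    simpa [Real.norm_eq_abs] using hb s hs
  have hint : IntervalIntegrable φ volume 0 t := hmaj.mono_fun' hmeas hae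
  refine ⟨hint, ?_⟩
  have h1 : ‖∫ s in (0:ℝ)..t, φ s‖ ≤ |∫ s in (0:ℝ)..t, M * s ^ r| :=
    intervalIntegral.norm_integral_le_abs_of_norm_le hae hmaj
  have h2 : (∫ s in (0:ℝ)..t, M * s ^ r) = M * (t ^ (r+1) / (r+1)) := by
    rw [intervalIntegral.integral_const_mul, integral_rpow (Or.inl hr),
      Real.zero_rpow hr0, sub_zero]
  have h3 : 0 ≤ M * (t ^ (r+1) / (r+1)) :=
    mul_nonneg hM (div_nonneg (Real.rpow_nonneg ht _) (by linarith))
  calc |∫ s in (0:ℝ)..t, φ s| ≤ |∫ s in (0:ℝ)..t, M * s ^ r| := h1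
    _ = M * (t ^ (r+1) / (r+1)) := by rw [h2, abs_of_nonneg h3]

end Aux

set_option maxHeartbeats 2000000 in
/-- **Lemma 3.6 (local existence and uniqueness).** Let `H ∈ (0,1/2)`, `a > 0`,
`b ≥ 0`, `x₀ > 0`, and let `g` be continuous with `g 0 = 0` and Hölder of order
`β ∈ (0,H)` on `[0,1]`.  Then there is `δ > 0` such that the equation
`x_t = x₀ + a∫₀ᵗ s^{2H-1}/x_s ds − b∫₀ᵗ x_s ds + g(t)` has a continuous solution
on `[0,δ]` with values in `[x₀/2, 2x₀]` and `x_0 = x₀`, unique in that class. -/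
theorem local_existence_uniqueness
    (H a b x₀ : ℝ) (hH0 : 0 < H) (hH : H < 1/2) (ha : 0 < a) (hb : 0 ≤ b)
    (hx₀ : 0 < x₀)
    (g : ℝ → ℝ) (hgc : ContinuousOn g (Set.Ici 0)) (hg0 : g 0 = 0)
    (C β : ℝ) (hC : 0 < C) (hβ0 : 0 < β) (hβH : β < H)
    (hgH : ∀ s ∈ Set.Icc (0:ℝ) 1, ∀ t ∈ Set.Icc (0:ℝ) 1,
      |g t - g s| ≤ C * |t - s| ^ β) :
    ∃ δ > (0:ℝ), ∃ x : ℝ → ℝ,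
      (ContinuousOn x (Set.Icc 0 δ) ∧
        (∀ t ∈ Set.Icc (0:ℝ) δ, x t ∈ Set.Icc (x₀ / 2) (2 * x₀)) ∧
        x 0 = x₀ ∧
        (∀ t ∈ Set.Icc (0:ℝ) δ,
          x t = x₀ + a * (∫ s in (0:ℝ)..t, s ^ (2 * H - 1) / x s)
            - b * (∫ s in (0:ℝ)..t, x s) + g t)) ∧
      (∀ y : ℝ → ℝ,
        ContinuousOn y (Set.Icc 0 δ) →
        (∀ t ∈ Set.Icc (0:ℝ) δ, y t ∈ Set.Icc (x₀ / 2) (2 * x₀)) →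
        y 0 = x₀ →
        (∀ t ∈ Set.Icc (0:ℝ) δ,
          y t = x₀ + a * (∫ s in (0:ℝ)..t, s ^ (2 * H - 1) / y s)
            - b * (∫ s in (0:ℝ)..t, y s) + g t) →
        ∀ t ∈ Set.Icc (0:ℝ) δ, y t = x t) := by
  have h2H : (0:ℝ) < 2*H := by linarith
  have hr : (-1:ℝ) < 2*H - 1 := by linarith
  have hr0 : (2*H - 1) + 1 ≠ 0 := by intro h; nlinarith
  have hr1 : (2*H - 1) + 1 = 2*H := by ring
  -- choose δ
  obtain ⟨δ, hδpos, hδ1, hψ⟩ : ∃ δ : ℝ, δ ∈ Set.Ioi (0:ℝ) ∧ δ ≤ 1 ∧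
      (a*(4/x₀^2+2/x₀)/(2*H)) * δ^(2*H) + (b*(1+2*x₀)) * δ + C * δ^β
        < min (1/2) (x₀/2) := by
    have h1 : Filter.Tendsto (fun d : ℝ => d ^ (2*H)) (nhds 0) (nhds 0) := by
      have := (Real.continuousAt_rpow_const 0 (2*H) (Or.inr h2H.le)).tendsto
      simpa [Real.zero_rpow h2H.ne'] using this
    have h2 : Filter.Tendsto (fun d : ℝ => d ^ β) (nhds 0) (nhds 0) := by
      have := (Real.continuousAt_rpow_const 0 β (Or.inr hβ0.le)).tendsto
      simpa [Real.zero_rpow hβ0.ne'] using this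
    have htend : Filter.Tendsto
        (fun d : ℝ => (a*(4/x₀^2+2/x₀)/(2*H)) * d^(2*H) + (b*(1+2*x₀)) * d + C * d^β)
        (nhds 0) (nhds 0) := by
      have hlin : Filter.Tendsto (fun d : ℝ => d) (nhds 0) (nhds 0) := tendsto_id
      have := ((h1.const_mul (a*(4/x₀^2+2/x₀)/(2*H))).add
        (hlin.const_mul (b*(1+2*x₀)))).add (h2.const_mul C)
      simpa using this
    have hlt : (0:ℝ) < min (1/2) (x₀/2) := lt_min (by norm_num) (by linarith)
    have hev1 : ∀ᶠ d in nhdsWithin (0:ℝ) (Set.Ioi 0),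
        (a*(4/x₀^2+2/x₀)/(2*H)) * d^(2*H) + (b*(1+2*x₀)) * d + C * d^β
          < min (1/2) (x₀/2) :=
      eventually_nhdsWithin_of_eventually_nhds (htend.eventually (gt_mem_nhds hlt))
    have hev2 : ∀ᶠ d in nhdsWithin (0:ℝ) (Set.Ioi 0), d ≤ (1:ℝ) :=
      eventually_nhdsWithin_of_eventually_nhds
        (Filter.eventually_of_mem (Iio_mem_nhds (by norm_num)) fun d hd => le_of_lt hd)
    have hev3 : ∀ᶠ d in nhdsWithin (0:ℝ) (Set.Ioi 0), d ∈ Set.Ioi (0:ℝ) :=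
      self_mem_nhdsWithin
    exact ((hev3.and (hev2.and hev1)).mono fun d hd => ⟨hd.1, hd.2.1, hd.2.2⟩).exists
  have hδ0 : (0:ℝ) < δ := hδpos
  have hle : (0:ℝ) ≤ δ := hδ0.le
  have hδ2H : (0:ℝ) ≤ δ^(2*H) := Real.rpow_nonneg hle _
  have hδβ : (0:ℝ) ≤ δ^β := Real.rpow_nonneg hle _
  -- the two key smallness facts
  have hKc : a*(4/x₀^2)/(2*H)*δ^(2*H) + b*δ ≤ 1/2 := by
    have h1 : (a*(4/x₀^2+2/x₀)/(2*H)) * δ^(2*H) + (b*(1+2*x₀)) * δ + C * δ^β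
        < 1/2 := lt_of_lt_of_le hψ (min_le_left _ _)
    have h2 : 0 ≤ a*(2/x₀)/(2*H)*δ^(2*H) := by positivity
    have h3 : 0 ≤ b*(2*x₀)*δ := by positivity
    have h4 : 0 ≤ C * δ^β := by positivity
    have hs1 : a*(4/x₀^2+2/x₀)/(2*H)*δ^(2*H)
        = a*(4/x₀^2)/(2*H)*δ^(2*H) + a*(2/x₀)/(2*H)*δ^(2*H) := by ring
    have hs2 : b*(1+2*x₀)*δ = b*δ + b*(2*x₀)*δ := by ring
    linarith
  have hKm : a*(2/x₀)/(2*H)*δ^(2*H) + b*(2*x₀)*δ + C*δ^β ≤ x₀/2 := by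
    have h1 : (a*(4/x₀^2+2/x₀)/(2*H)) * δ^(2*H) + (b*(1+2*x₀)) * δ + C * δ^β
        < x₀/2 := lt_of_lt_of_le hψ (min_le_right _ _)
    have h2 : 0 ≤ a*(4/x₀^2)/(2*H)*δ^(2*H) := by positivity
    have h3 : 0 ≤ b*δ := by positivity
    have hs1 : a*(4/x₀^2+2/x₀)/(2*H)*δ^(2*H)
        = a*(4/x₀^2)/(2*H)*δ^(2*H) + a*(2/x₀)/(2*H)*δ^(2*H) := by ring
    have hs2 : b*(1+2*x₀)*δ = b*δ + b*(2*x₀)*δ := by ring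
    linarith
  -- the fixed-point space
  have hrm : Measurable fun s : ℝ => s ^ (2*H-1) := by fun_prop
  -- measurability of the singular integrand
  have hFmeas : ∀ (f : C(Set.Icc (0:ℝ) δ, ℝ)) (t : ℝ),
      AEStronglyMeasurable (fun s : ℝ => s ^ (2*H-1) / PicExt x₀ hle f s)
        (volume.restrict (Set.uIoc (0:ℝ) t)) := fun f _ =>
    ((hrm.div (Ext_continuous x₀ hle f).measurable)).aestronglyMeasurable
  -- pointwise bound for the singular integrand
  have hFbd : ∀ (f : C(Set.Icc (0:ℝ) δ, ℝ)) (s : ℝ), 0 ≤ s →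
      |s ^ (2*H-1) / PicExt x₀ hle f s| ≤ (2/x₀) * s ^ (2*H-1) := by
    intro f s hs
    have h0 : 0 ≤ s ^ (2*H-1) := Real.rpow_nonneg hs _
    have hE := Ext_pos hx₀ hle f s
    rw [abs_of_nonneg (div_nonneg h0 hE.le)]
    calc s ^ (2*H-1) / PicExt x₀ hle f s ≤ s ^ (2*H-1) / (x₀/2) :=
          div_le_div_of_nonneg_left h0 (by linarith) (Ext_le_left x₀ hle f s)
      _ = (2/x₀) * s ^ (2*H-1) := by field_simp
  -- pointwise Lipschitz bound
  have hFdiff : ∀ (f g' : C(Set.Icc (0:ℝ) δ, ℝ)) (s : ℝ), 0 ≤ s →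
      |s ^ (2*H-1) / PicExt x₀ hle f s - s ^ (2*H-1) / PicExt x₀ hle g' s|
        ≤ (4/x₀^2 * dist f g') * s ^ (2*H-1) := by
    intro f g' s hs
    have h0 : 0 ≤ s ^ (2*H-1) := Real.rpow_nonneg hs _
    have hEf := Ext_pos hx₀ hle f s
    have hEg := Ext_pos hx₀ hle g' s
    have heq : s ^ (2*H-1) / PicExt x₀ hle f s - s ^ (2*H-1) / PicExt x₀ hle g' s
        = s ^ (2*H-1) * (PicExt x₀ hle g' s - PicExt x₀ hle f s)
          / (PicExt x₀ hle f s * PicExt x₀ hle g' s) := by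
      field_simp
    rw [heq, abs_div, abs_mul, abs_of_nonneg h0,
      abs_of_pos (mul_pos hEf hEg)]
    have hnum : s ^ (2*H-1) * |PicExt x₀ hle g' s - PicExt x₀ hle f s|
        ≤ s ^ (2*H-1) * dist f g' := by
      refine mul_le_mul_of_nonneg_left ?_ h0
      rw [dist_comm f g']
      exact Ext_dist x₀ hle g' f s
    have hden : x₀^2/4 ≤ PicExt x₀ hle f s * PicExt x₀ hle g' s := by
      have := mul_le_mul (Ext_le_left x₀ hle f s) (Ext_le_left x₀ hle g' s)
        (by linarith) hEf.le
      nlinarith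
    calc s ^ (2*H-1) * |PicExt x₀ hle g' s - PicExt x₀ hle f s|
          / (PicExt x₀ hle f s * PicExt x₀ hle g' s)
        ≤ s ^ (2*H-1) * dist f g' / (x₀^2/4) :=
          div_le_div₀ (by positivity) hnum (by positivity) hden
      _ = (4/x₀^2 * dist f g') * s ^ (2*H-1) := by field_simp
  -- integrability + integral bound of the singular term
  have hFint : ∀ (f : C(Set.Icc (0:ℝ) δ, ℝ)) (t : ℝ), t ∈ Set.Icc (0:ℝ) δ →
      IntervalIntegrable (fun s : ℝ => s ^ (2*H-1) / PicExt x₀ hle f s) volume 0 t ∧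
        |∫ s in (0:ℝ)..t, s ^ (2*H-1) / PicExt x₀ hle f s|
          ≤ (2/x₀) * (t ^ (2*H) / (2*H)) := by
    intro f t ht
    have := aux_int_bound hr hr0 ht.1 (by positivity) (hFmeas f t)
      (fun s hs => hFbd f s hs.1.le)
    rwa [hr1] at this
  -- continuity of the Picard map (as a function on ℝ)
  have hTcont : ∀ f : C(Set.Icc (0:ℝ) δ, ℝ),
      ContinuousOn (fun u : ℝ => x₀ + a * (∫ s in (0:ℝ)..u, s ^ (2*H-1) / PicExt x₀ hle f s)
        - b * (∫ s in (0:ℝ)..u, PicExt x₀ hle f s) + g u) (Set.Icc 0 δ) := by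
    intro f
    have hP : ContinuousOn (fun u : ℝ => ∫ s in (0:ℝ)..u, s ^ (2*H-1) / PicExt x₀ hle f s)
        (Set.Icc 0 δ) := by
      have h1 := (hFint f δ ⟨hle, le_refl δ⟩).1
      have h2 : IntegrableOn (fun s : ℝ => s ^ (2*H-1) / PicExt x₀ hle f s)
          (Set.uIcc (0:ℝ) δ) := by
        rw [Set.uIcc_of_le hle, integrableOn_Icc_iff_integrableOn_Ioc]
        exact (intervalIntegrable_iff_integrableOn_Ioc_of_le hle).1 h1
      simpa [Set.uIcc_of_le hle] using intervalIntegral.continuousOn_primitive_interval h2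
    have hQ : ContinuousOn (fun u : ℝ => ∫ s in (0:ℝ)..u, PicExt x₀ hle f s)
        (Set.Icc 0 δ) := by
      have h2 : IntegrableOn (PicExt x₀ hle f) (Set.uIcc (0:ℝ) δ) := by
        rw [Set.uIcc_of_le hle]
        exact (Ext_continuous x₀ hle f).integrableOn_Icc
      simpa [Set.uIcc_of_le hle] using intervalIntegral.continuousOn_primitive_interval h2
    exact ((continuousOn_const.add (continuousOn_const.mul hP)).sub
      (continuousOn_const.mul hQ)).add (hgc.mono fun u hu => hu.1)
  -- the Picard map
  set T : C(Set.Icc (0:ℝ) δ, ℝ) → C(Set.Icc (0:ℝ) δ, ℝ) := fun f =>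
    ⟨(Set.Icc (0:ℝ) δ).restrict (fun u : ℝ =>
      x₀ + a * (∫ s in (0:ℝ)..u, s ^ (2*H-1) / PicExt x₀ hle f s)
        - b * (∫ s in (0:ℝ)..u, PicExt x₀ hle f s) + g u), (hTcont f).restrict⟩ with hTdef
  have hTapp : ∀ (f : C(Set.Icc (0:ℝ) δ, ℝ)) (t : Set.Icc (0:ℝ) δ),
      T f t = x₀ + a * (∫ s in (0:ℝ)..(t:ℝ), s ^ (2*H-1) / PicExt x₀ hle f s)
        - b * (∫ s in (0:ℝ)..(t:ℝ), PicExt x₀ hle f s) + g t := fun f t => rfl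
  -- T maps into the ball
  have hTmem : ∀ (f : C(Set.Icc (0:ℝ) δ, ℝ)) (t : Set.Icc (0:ℝ) δ),
      T f t ∈ Set.Icc (x₀/2) (2*x₀) := by
    intro f t
    obtain ⟨ht0, htδ⟩ := t.2
    have hI1 : |∫ s in (0:ℝ)..(t:ℝ), s ^ (2*H-1) / PicExt x₀ hle f s|
        ≤ (2/x₀) * (δ ^ (2*H) / (2*H)) := by
      refine le_trans (hFint f t t.2).2 ?_
      have : (t:ℝ) ^ (2*H) ≤ δ ^ (2*H) := Real.rpow_le_rpow ht0 htδ h2H.le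
      gcongr
    have hI2 : |∫ s in (0:ℝ)..(t:ℝ), PicExt x₀ hle f s| ≤ (2*x₀) * δ := by
      have := intervalIntegral.norm_integral_le_of_norm_le_const
        (C := 2*x₀) (f := PicExt x₀ hle f) (a := (0:ℝ)) (b := (t:ℝ))
        (fun s _ => by
          rw [Real.norm_eq_abs, abs_of_pos (Ext_pos hx₀ hle f s)]
          exact Ext_le_right hx₀ hle f s)
      rw [Real.norm_eq_abs] at this
      calc |∫ s in (0:ℝ)..(t:ℝ), PicExt x₀ hle f s| ≤ 2*x₀ * |(t:ℝ) - 0| := this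
        _ = 2*x₀ * (t:ℝ) := by rw [sub_zero, abs_of_nonneg ht0]
        _ ≤ 2*x₀ * δ := by nlinarith
    have hI3 : |g (t:ℝ)| ≤ C * δ ^ β := by
      have h1 := hgH 0 ⟨le_refl 0, by norm_num⟩ (t:ℝ) ⟨ht0, htδ.trans hδ1⟩
      rw [hg0, sub_zero, sub_zero, abs_of_nonneg ht0] at h1
      refine h1.trans ?_
      have : (t:ℝ) ^ β ≤ δ ^ β := Real.rpow_le_rpow ht0 htδ hβ0.le
      gcongr
    rw [hTapp]
    have habs : |a * (∫ s in (0:ℝ)..(t:ℝ), s ^ (2*H-1) / PicExt x₀ hle f s)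
        - b * (∫ s in (0:ℝ)..(t:ℝ), PicExt x₀ hle f s) + g (t:ℝ)| ≤ x₀/2 := by
      have h1 : |a * (∫ s in (0:ℝ)..(t:ℝ), s ^ (2*H-1) / PicExt x₀ hle f s)
          - b * (∫ s in (0:ℝ)..(t:ℝ), PicExt x₀ hle f s) + g (t:ℝ)|
          ≤ a * |∫ s in (0:ℝ)..(t:ℝ), s ^ (2*H-1) / PicExt x₀ hle f s|
            + b * |∫ s in (0:ℝ)..(t:ℝ), PicExt x₀ hle f s| + |g (t:ℝ)| := by
        calc _ ≤ |a * (∫ s in (0:ℝ)..(t:ℝ), s ^ (2*H-1) / PicExt x₀ hle f s)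
              - b * (∫ s in (0:ℝ)..(t:ℝ), PicExt x₀ hle f s)| + |g (t:ℝ)| := abs_add_le _ _
          _ ≤ _ := by
            have := abs_sub (a * (∫ s in (0:ℝ)..(t:ℝ), s ^ (2*H-1) / PicExt x₀ hle f s))
              (b * (∫ s in (0:ℝ)..(t:ℝ), PicExt x₀ hle f s))
            rw [abs_mul, abs_mul, abs_of_pos ha, abs_of_nonneg hb] at this
            linarith
      have h2 : a * |∫ s in (0:ℝ)..(t:ℝ), s ^ (2*H-1) / PicExt x₀ hle f s|
          ≤ a * ((2/x₀) * (δ ^ (2*H) / (2*H))) := by gcongr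
      have h3 : b * |∫ s in (0:ℝ)..(t:ℝ), PicExt x₀ hle f s| ≤ b * ((2*x₀) * δ) := by gcongr
      have h4 : a * ((2/x₀) * (δ ^ (2*H) / (2*H))) = a*(2/x₀)/(2*H)*δ^(2*H) := by ring
      have h5 : b * ((2*x₀) * δ) = b*(2*x₀)*δ := by ring
      linarith
    have := abs_le.1 habs
    constructor <;> linarith [this.1, this.2]
  -- contraction property
  have hcontr : ∀ f g' : C(Set.Icc (0:ℝ) δ, ℝ), dist (T f) (T g') ≤ (1/2) * dist f g' := by
    intro f g'
    rw [ContinuousMap.dist_le (by positivity)]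
    intro t
    obtain ⟨ht0, htδ⟩ := t.2
    set d := dist f g' with hd
    have hd0 : 0 ≤ d := dist_nonneg
    have hIf := (hFint f t t.2).1
    have hIg := (hFint g' t t.2).1
    have hI1 : |∫ s in (0:ℝ)..(t:ℝ),
        (s ^ (2*H-1) / PicExt x₀ hle f s - s ^ (2*H-1) / PicExt x₀ hle g' s)|
        ≤ (4/x₀^2 * d) * (δ ^ (2*H) / (2*H)) := by
      have haux := aux_int_bound hr hr0 ht0 (by positivity)
        ((hFmeas f t).sub (hFmeas g' t))
        (fun s hs => hFdiff f g' s hs.1.le)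
      rw [hr1] at haux
      refine haux.2.trans ?_
      have : (t:ℝ) ^ (2*H) ≤ δ ^ (2*H) := Real.rpow_le_rpow ht0 htδ h2H.le
      gcongr
    have hI2 : |∫ s in (0:ℝ)..(t:ℝ), (PicExt x₀ hle f s - PicExt x₀ hle g' s)| ≤ d * δ := by
      have := intervalIntegral.norm_integral_le_of_norm_le_const
        (C := d) (f := fun s => PicExt x₀ hle f s - PicExt x₀ hle g' s) (a := (0:ℝ)) (b := (t:ℝ))
        (fun s _ => by rw [Real.norm_eq_abs]; exact Ext_dist x₀ hle f g' s)
      rw [Real.norm_eq_abs] at this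
      calc |∫ s in (0:ℝ)..(t:ℝ), (PicExt x₀ hle f s - PicExt x₀ hle g' s)|
          ≤ d * |(t:ℝ) - 0| := this
        _ = d * (t:ℝ) := by rw [sub_zero, abs_of_nonneg ht0]
        _ ≤ d * δ := by nlinarith
    have hsub1 : (∫ s in (0:ℝ)..(t:ℝ), s ^ (2*H-1) / PicExt x₀ hle f s)
        - (∫ s in (0:ℝ)..(t:ℝ), s ^ (2*H-1) / PicExt x₀ hle g' s)
        = ∫ s in (0:ℝ)..(t:ℝ),
            (s ^ (2*H-1) / PicExt x₀ hle f s - s ^ (2*H-1) / PicExt x₀ hle g' s) :=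
      (intervalIntegral.integral_sub hIf hIg).symm
    have hsub2 : (∫ s in (0:ℝ)..(t:ℝ), PicExt x₀ hle f s)
        - (∫ s in (0:ℝ)..(t:ℝ), PicExt x₀ hle g' s)
        = ∫ s in (0:ℝ)..(t:ℝ), (PicExt x₀ hle f s - PicExt x₀ hle g' s) :=
      (intervalIntegral.integral_sub ((Ext_continuous x₀ hle f).intervalIntegrable _ _)
        ((Ext_continuous x₀ hle g').intervalIntegrable _ _)).symm
    rw [Real.dist_eq, hTapp, hTapp]
    have heq : (x₀ + a * (∫ s in (0:ℝ)..(t:ℝ), s ^ (2*H-1) / PicExt x₀ hle f s)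
          - b * (∫ s in (0:ℝ)..(t:ℝ), PicExt x₀ hle f s) + g (t:ℝ))
        - (x₀ + a * (∫ s in (0:ℝ)..(t:ℝ), s ^ (2*H-1) / PicExt x₀ hle g' s)
          - b * (∫ s in (0:ℝ)..(t:ℝ), PicExt x₀ hle g' s) + g (t:ℝ))
        = a * (∫ s in (0:ℝ)..(t:ℝ),
            (s ^ (2*H-1) / PicExt x₀ hle f s - s ^ (2*H-1) / PicExt x₀ hle g' s))
          - b * (∫ s in (0:ℝ)..(t:ℝ), (PicExt x₀ hle f s - PicExt x₀ hle g' s)) := by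
      rw [← hsub1, ← hsub2]; ring
    rw [heq]
    have h1 : |a * (∫ s in (0:ℝ)..(t:ℝ),
          (s ^ (2*H-1) / PicExt x₀ hle f s - s ^ (2*H-1) / PicExt x₀ hle g' s))
        - b * (∫ s in (0:ℝ)..(t:ℝ), (PicExt x₀ hle f s - PicExt x₀ hle g' s))|
        ≤ a * ((4/x₀^2 * d) * (δ ^ (2*H) / (2*H))) + b * (d * δ) := by
      have := abs_sub (a * (∫ s in (0:ℝ)..(t:ℝ),
          (s ^ (2*H-1) / PicExt x₀ hle f s - s ^ (2*H-1) / PicExt x₀ hle g' s)))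
        (b * (∫ s in (0:ℝ)..(t:ℝ), (PicExt x₀ hle f s - PicExt x₀ hle g' s)))
      rw [abs_mul, abs_mul, abs_of_pos ha, abs_of_nonneg hb] at this
      have h2 : a * |∫ s in (0:ℝ)..(t:ℝ),
          (s ^ (2*H-1) / PicExt x₀ hle f s - s ^ (2*H-1) / PicExt x₀ hle g' s)|
          ≤ a * ((4/x₀^2 * d) * (δ ^ (2*H) / (2*H))) := by gcongr
      have h3 : b * |∫ s in (0:ℝ)..(t:ℝ), (PicExt x₀ hle f s - PicExt x₀ hle g' s)|
          ≤ b * (d * δ) := by gcongr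
      linarith
    refine h1.trans ?_
    have h4 : a * ((4/x₀^2 * d) * (δ ^ (2*H) / (2*H))) + b * (d * δ)
        = (a*(4/x₀^2)/(2*H)*δ^(2*H) + b*δ) * d := by ring
    rw [h4]
    exact mul_le_mul_of_nonneg_right hKc hd0
  -- contracting with constant 1/2
  have hcw : ContractingWith (1/2 : NNReal) T := by
    constructor
    · rw [← NNReal.coe_lt_coe]; norm_num
    · refine LipschitzWith.of_dist_le_mul fun f g' => ?_
      have : ((1/2 : NNReal) : ℝ) = 1/2 := by norm_num
      rw [this]
      exact hcontr f g'
  haveI : Nonempty C(Set.Icc (0:ℝ) δ, ℝ) := ⟨ContinuousMap.const _ 0⟩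
  set xh := ContractingWith.fixedPoint T hcw with hxh
  have hfix : T xh = xh := hcw.fixedPoint_isFixedPt
  have hxhmem : ∀ t, xh t ∈ Set.Icc (x₀/2) (2*x₀) := by
    intro t
    rw [← hfix]
    exact hTmem xh t
  -- the solution
  refine ⟨δ, hδ0, PicExt x₀ hle xh, ⟨(Ext_continuous x₀ hle xh).continuousOn, ?_, ?_, ?_⟩, ?_⟩
  · intro t ht
    rw [Ext_eq hle xh hxhmem ht]
    have := hxhmem ⟨t, ht⟩
    simpa [div_eq_mul_inv] using this
  · have h0 : (0:ℝ) ∈ Set.Icc (0:ℝ) δ := ⟨le_refl 0, hle⟩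
    rw [Ext_eq hle xh hxhmem h0, ← hfix, hTapp]
    simp [hg0]
  · intro t ht
    have h1 : PicExt x₀ hle xh t = xh ⟨t, ht⟩ := Ext_eq hle xh hxhmem ht
    have h2 : xh ⟨t, ht⟩ = T xh ⟨t, ht⟩ := by rw [hfix]
    rw [h1, h2, hTapp]
  · -- uniqueness
    intro y hyc hymem hy0 hyeq t ht
    set yh : C(Set.Icc (0:ℝ) δ, ℝ) := ⟨(Set.Icc (0:ℝ) δ).restrict y, hyc.restrict⟩ with hyh
    have hyhmem : ∀ t : Set.Icc (0:ℝ) δ, yh t ∈ Set.Icc (x₀/2) (2*x₀) :=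
      fun t => hymem t t.2
    have hEy : ∀ s : ℝ, s ∈ Set.Icc (0:ℝ) δ → PicExt x₀ hle yh s = y s := by
      intro s hs
      rw [Ext_eq hle yh hyhmem hs]
      rfl
    have hfixy : Function.IsFixedPt T yh := by
      refine ContinuousMap.ext fun u => ?_
      obtain ⟨hu0, huδ⟩ := u.2
      have hsub : Set.uIcc (0:ℝ) (u:ℝ) ⊆ Set.Icc (0:ℝ) δ := by
        rw [Set.uIcc_of_le hu0]
        exact Set.Icc_subset_Icc (le_refl 0) huδ
      have e1 : (∫ s in (0:ℝ)..(u:ℝ), s ^ (2*H-1) / PicExt x₀ hle yh s)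
          = ∫ s in (0:ℝ)..(u:ℝ), s ^ (2*H-1) / y s :=
        intervalIntegral.integral_congr fun s hs => by rw [hEy s (hsub hs)]
      have e2 : (∫ s in (0:ℝ)..(u:ℝ), PicExt x₀ hle yh s) = ∫ s in (0:ℝ)..(u:ℝ), y s :=
        intervalIntegral.integral_congr fun s hs => hEy s (hsub hs)
      show T yh u = yh u
      rw [hTapp, e1, e2]
      exact (hyeq (u:ℝ) u.2).symm
    have hyx : yh = xh := hcw.fixedPoint_unique hfixy
    have h1 : y t = yh ⟨t, ht⟩ := rfl
    rw [h1, hyx, ← Ext_eq hle xh hxhmem ht]
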